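/- Davenport constant of A(G): Let G = (V,E,r) be a connected graph with at least two vertices (so E is nonempty). For a ∈ A(G) define ℓ(a) = Σ_{v ∈ V} deg(v)·a_V(v) − Σ_{e ∈ E} a_E(e). Then the maximum of ℓ(a) over all atoms a of A(G) equals 2|E| − |V| + 1; that is, ℓ(a) ≤ 2|E| − |V| + 1 for every atom a, and there exists an atom attaining this value. -/

import Mathlib

/-- An agglomeration on the graph given by `r : E → Sym2 V`. -/
def IsAgg {V E : Type*} (r : E → Sym2 V) (a : (V → ℕ) × (E → ℕ)) : Prop :=
  ∀ (e : E) (v : V), v ∈ r e → a.2 e ≤ a.1 v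

/-- An atom of the monoid of agglomerations. -/
def IsAtomAgg {V E : Type*} (r : E → Sym2 V) (a : (V → ℕ) × (E → ℕ)) : Prop :=
  IsAgg r a ∧ a ≠ 0 ∧
    ∀ b c : (V → ℕ) × (E → ℕ), IsAgg r b → IsAgg r c → a = b + c → b = 0 ∨ c = 0

/-- `AggJoined r E' x y`: `x` and `y` are joined by a walk using only edges in `E'`. -/
def AggJoined {V E : Type*} (r : E → Sym2 V) (E' : Set E) : V → V → Prop :=
  Relation.ReflTransGen (fun x y => ∃ e ∈ E', r e = s(x, y))

set_option linter.unusedVariables false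

namespace DavAux

variable {V E : Type*}

theorem aggJoined_symm {r : E → Sym2 V} {F : Set E} {x y : V}
    (h : AggJoined r F x y) : AggJoined r F y x :=
  haveI : Std.Symm (fun x y : V => ∃ e ∈ F, r e = s(x, y)) :=
    ⟨fun a b ⟨e, he, hre⟩ => ⟨e, he, by rw [hre, Sym2.eq_swap]⟩⟩
  Std.Symm.symm (r := Relation.ReflTransGen (fun x y : V => ∃ e ∈ F, r e = s(x, y))) _ _ h

theorem aggJoined_mono {r : E → Sym2 V} {F F' : Set E} (hFF : F ⊆ F') {x y : V}
    (h : AggJoined r F x y) : AggJoined r F' x y :=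
  Relation.ReflTransGen.mono (r := fun x y : V => ∃ e ∈ F, r e = s(x, y))
    (p := fun x y : V => ∃ e ∈ F', r e = s(x, y)) (fun a b ⟨e, he, hre⟩ => ⟨e, hFF he, hre⟩) _ _ h

/-- `n`-step reachability. -/
def StepN (r : E → Sym2 V) (F : Set E) : ℕ → V → V → Prop
  | 0, x, y => x = y
  | (n+1), x, y => ∃ z e, StepN r F n x z ∧ e ∈ F ∧ r e = s(z, y)

theorem aggJoined_iff_stepN {r : E → Sym2 V} {F : Set E} {x y : V} :
    AggJoined r F x y ↔ ∃ n, StepN r F n x y := by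
  constructor
  · intro h
    induction h with
    | refl => exact ⟨0, rfl⟩
    | tail _ hbc ih =>
      obtain ⟨n, hn⟩ := ih
      obtain ⟨e, he, hre⟩ := hbc
      exact ⟨n + 1, _, e, hn, he, hre⟩
  · rintro ⟨n, hn⟩
    induction n generalizing y with
    | zero => exact hn ▸ Relation.ReflTransGen.refl
    | succ n ih =>
      obtain ⟨z, e, hz, he, hre⟩ := hn
      exact Relation.ReflTransGen.tail (ih hz) ⟨e, he, hre⟩

/-- Core BFS lemma: given a root `x0` and an edge set `F` connecting `x0` to all
vertices, select for each vertex `v ≠ x0` an edge `g v ∈ F`, injectively, so that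
the selected edges still connect `x0` to everything. -/
theorem exists_edge_map [Nonempty E] (r : E → Sym2 V) (F : Set E) (x0 : V)
    (hF : ∀ y : V, AggJoined r F x0 y) :
    ∃ g : V → E, (∀ v, v ≠ x0 → g v ∈ F)
      ∧ (∀ v w, v ≠ x0 → w ≠ x0 → g v = g w → v = w)
      ∧ (∀ y, AggJoined r {e | ∃ v, v ≠ x0 ∧ g v = e} x0 y) := by
  classical
  have hex : ∀ v : V, ∃ n, StepN r F n x0 v := fun v => aggJoined_iff_stepN.mp (hF v)
  set d : V → ℕ := fun v => Nat.find (hex v) with hd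
  have hspec : ∀ v, StepN r F (d v) x0 v := fun v => Nat.find_spec (hex v)
  have hd0 : ∀ v, d v = 0 ↔ v = x0 := by
    intro v
    constructor
    · intro h
      have := hspec v
      rw [h] at this
      exact this.symm
    · intro h
      rw [h]
      exact Nat.eq_zero_of_le_zero (Nat.find_le (show StepN r F 0 x0 x0 from rfl))
  have key : ∀ v, v ≠ x0 → ∃ e, e ∈ F ∧ ∃ z, r e = s(z, v) ∧ d z < d v := by
    intro v hv
    have hdv : d v ≠ 0 := fun h => hv ((hd0 v).mp h)
    obtain ⟨m, hm⟩ := Nat.exists_eq_succ_of_ne_zero hdv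
    have := hspec v
    rw [hm] at this
    obtain ⟨z, e, hz, he, hre⟩ := this
    refine ⟨e, he, z, hre, ?_⟩
    have : d z ≤ m := Nat.find_le hz
    omega
  set g : V → E := fun v => if hv : v ≠ x0 then Classical.choose (key v hv) else
    Classical.arbitrary E with hg
  have hgspec : ∀ v (hv : v ≠ x0), g v ∈ F ∧ ∃ z, r (g v) = s(z, v) ∧ d z < d v := by
    intro v hv
    have : g v = Classical.choose (key v hv) := by rw [hg]; simp [hv]
    rw [this]
    exact Classical.choose_spec (key v hv)
  refine ⟨g, fun v hv => (hgspec v hv).1, ?_, ?_⟩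
  · intro v w hv hw hvw
    obtain ⟨_, z1, h1, hz1⟩ := hgspec v hv
    obtain ⟨_, z2, h2, hz2⟩ := hgspec w hw
    rw [hvw, h2] at h1
    rcases Sym2.eq_iff.mp h1 with ⟨hza, hvwa⟩ | ⟨hzb, hvb⟩
    · exact hvwa.symm
    · subst hzb; subst hvb; omega
  · intro y
    generalize hn : d y = n
    induction n using Nat.strong_induction_on generalizing y with
    | _ n ih =>
      by_cases hy : y = x0
      · exact hy ▸ Relation.ReflTransGen.refl
      · obtain ⟨hgF, z, hre, hdz⟩ := hgspec y hy
        exact Relation.ReflTransGen.tail (ih (d z) (hn ▸ hdz) z rfl)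
          ⟨g y, ⟨y, hy, rfl⟩, hre⟩

end DavAux

namespace DavAux
section
variable {V E : Type*} [Fintype V] [Fintype E]

open Finset

/-- A connecting edge set has at least `|V| - 1` edges. -/
theorem card_le_of_conn [Nonempty E] (r : E → Sym2 V) (F : Set E)
    [DecidablePred (· ∈ F)] (x0 : V)
    (hF : ∀ y : V, AggJoined r F x0 y) :
    Fintype.card V ≤ (Finset.univ.filter (· ∈ F)).card + 1 := by
  classical
  obtain ⟨g, hgF, hginj, -⟩ := exists_edge_map r F x0 hF
  have h1 : (Finset.univ.erase x0).card ≤ (Finset.univ.filter (· ∈ F)).card := by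
    apply Finset.card_le_card_of_injOn g
    · intro v hv
      simp only [Finset.mem_coe, Finset.mem_erase, Finset.mem_univ, and_true] at hv
      simp only [Finset.mem_coe, Finset.mem_filter, Finset.mem_univ, true_and]
      exact hgF v hv
    · intro v hv w hw hvw
      simp only [Finset.coe_erase, Set.mem_diff, Set.mem_singleton_iff] at hv hw
      exact hginj v w hv.2 hw.2 hvw
  have h2 : (Finset.univ.erase x0).card = Fintype.card V - 1 := by
    rw [Finset.card_erase_of_mem (Finset.mem_univ x0), Finset.card_univ]
  have h3 : 1 ≤ Fintype.card V := Fintype.card_pos_iff.mpr ⟨x0⟩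
  omega

/-- Atoms are 0/1-valued. -/
theorem atom_le_one {r : E → Sym2 V} {a : (V → ℕ) × (E → ℕ)} (ha : IsAtomAgg r a) :
    (∀ v, a.1 v ≤ 1) ∧ (∀ e, a.2 e ≤ 1) := by
  obtain ⟨hagg, hne, hatom⟩ := ha
  set b : (V → ℕ) × (E → ℕ) := (fun v => min (a.1 v) 1, fun e => min (a.2 e) 1) with hb
  set c : (V → ℕ) × (E → ℕ) := (fun v => a.1 v - min (a.1 v) 1,
    fun e => a.2 e - min (a.2 e) 1) with hc
  have hbagg : IsAgg r b := by
    intro e v hv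
    have := hagg e v hv
    simp only [hb]
    omega
  have hcagg : IsAgg r c := by
    intro e v hv
    have := hagg e v hv
    simp only [hc]
    omega
  have habc : a = b + c := by
    refine Prod.ext (funext fun v => ?_) (funext fun e => ?_) <;>
      simp only [hb, hc, Prod.fst_add, Prod.snd_add, Pi.add_apply] <;> omega
  -- some vertex has nonzero value
  have hvex : ∃ v, a.1 v ≠ 0 := by
    by_contra h
    push_neg at h
    apply hne
    have h2 : ∀ e, a.2 e = 0 := by
      intro e
      have hm : (r e).out.1 ∈ r e := Sym2.out_fst_mem _
      have := hagg e _ hm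
      rw [h] at this
      omega
    refine Prod.ext (funext fun v => h v) (funext fun e => h2 e)
  obtain ⟨v0, hv0⟩ := hvex
  have hbne : b ≠ 0 := by
    intro h
    have : b.1 v0 = 0 := by rw [h]; rfl
    simp only [hb] at this
    omega
  rcases hatom b c hbagg hcagg habc with h | h
  · exact absurd h hbne
  · constructor
    · intro v
      have : c.1 v = 0 := by rw [h]; rfl
      simp only [hc] at this
      omega
    · intro e
      have : c.2 e = 0 := by rw [h]; rfl
      simp only [hc] at this
      omega

/-- The support of an atom is connected via its edge support. -/
theorem atom_support_conn {r : E → Sym2 V} {a : (V → ℕ) × (E → ℕ)} (ha : IsAtomAgg r a)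
    {v w : V} (hv : a.1 v ≠ 0) (hw : a.1 w ≠ 0) :
    AggJoined r {e | a.2 e ≠ 0} v w := by
  classical
  obtain ⟨hle1, hle2⟩ := atom_le_one ha
  obtain ⟨hagg, hne, hatom⟩ := ha
  set J : V → Prop := fun u => AggJoined r {e | a.2 e ≠ 0} v u with hJ
  -- helper: an edge in the support with one endpoint J has all endpoints J
  have hstep : ∀ e, a.2 e ≠ 0 → ∀ u ∈ r e, J u → ∀ u' ∈ r e, J u' := by
    intro e he u hu hJu u' hu'
    by_cases h : u = u'
    · exact h ▸ hJu
    · have : r e = s(u, u') := (Sym2.mem_and_mem_iff h).mp ⟨hu, hu'⟩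
      exact Relation.ReflTransGen.tail hJu ⟨e, he, this⟩
  set b : (V → ℕ) × (E → ℕ) :=
    (fun u => if a.1 u ≠ 0 ∧ J u then 1 else 0,
     fun e => if a.2 e ≠ 0 ∧ ∀ u ∈ r e, J u then 1 else 0) with hb
  set c : (V → ℕ) × (E → ℕ) := (fun u => a.1 u - b.1 u, fun e => a.2 e - b.2 e) with hc
  have hb1 : ∀ u, b.1 u = if a.1 u ≠ 0 ∧ J u then 1 else 0 := fun u => rfl
  have hb2 : ∀ e, b.2 e = if a.2 e ≠ 0 ∧ ∀ u ∈ r e, J u then 1 else 0 := fun e => rfl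
  have hbagg : IsAgg r b := by
    intro e u hu
    rw [hb1, hb2]
    by_cases h : a.2 e ≠ 0 ∧ ∀ u ∈ r e, J u
    · have h1 : a.1 u ≠ 0 := by have := hagg e u hu; omega
      rw [if_pos h, if_pos ⟨h1, h.2 u hu⟩]
    · rw [if_neg h]
      omega
  have hcagg : IsAgg r c := by
    intro e u hu
    have hae := hagg e u hu
    simp only [hc, hb1, hb2]
    by_cases h : a.2 e ≠ 0 ∧ ∀ u ∈ r e, J u
    · have h1 : a.1 u ≠ 0 := by omega
      rw [if_pos h, if_pos ⟨h1, h.2 u hu⟩]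
      omega
    · rw [if_neg h]
      by_cases h2 : a.1 u ≠ 0 ∧ J u
      · rw [if_pos h2]
        -- then a.2 e must be 0
        have hz : a.2 e = 0 := by
          by_contra hz
          exact h ⟨hz, hstep e hz u hu h2.2⟩
        omega
      · rw [if_neg h2]
        omega
  have habc : a = b + c := by
    refine Prod.ext (funext fun u => ?_) (funext fun e => ?_) <;>
      simp only [hc, hb1, hb2, Prod.fst_add, Prod.snd_add, Pi.add_apply] <;> split <;> omega
  have hbne : b ≠ 0 := by
    intro h
    have : b.1 v = 0 := by rw [h]; rfl
    rw [hb1, if_pos ⟨hv, Relation.ReflTransGen.refl⟩] at this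
    omega
  rcases hatom b c hbagg hcagg habc with h | h
  · exact absurd h hbne
  · -- c = 0, so a = b, so any w in the support satisfies J w
    have hcw : c.1 w = 0 := by rw [h]; rfl
    simp only [hc, hb1] at hcw
    by_cases hJw : a.1 w ≠ 0 ∧ J w
    · exact hJw.2
    · rw [if_neg hJw] at hcw
      omega

end
end DavAux

namespace DavAux
section
variable {V E : Type*}

theorem sym2_nondiag {z : Sym2 V} (hz : ¬ z.IsDiag) : ∃ u w, u ≠ w ∧ z = s(u, w) := by
  induction z using Sym2.ind with
  | _ u w => exact ⟨u, w, fun h => hz (by rw [h]; exact Sym2.mk_isDiag_iff.mpr rfl), rfl⟩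

theorem conn_lift {r : E → Sym2 V} {F : Set E} {P : V → Prop}
    (hP : ∀ u u', P u → P u' → AggJoined r F u u')
    (hcond : ∀ e : E, e ∉ F → ∀ u ∈ r e, P u) :
    ∀ {x y : V}, AggJoined r Set.univ x y → AggJoined r F x y := by
  intro x y h
  induction h with
  | refl => exact Relation.ReflTransGen.refl
  | @tail p q hxp hpq ih =>
    obtain ⟨e, -, hre⟩ := hpq
    by_cases he : e ∈ F
    · exact Relation.ReflTransGen.tail ih ⟨e, he, hre⟩
    · have hp : p ∈ r e := by rw [hre]; exact Sym2.mem_mk_left _ _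
      have hq : q ∈ r e := by rw [hre]; exact Sym2.mem_mk_right _ _
      exact ih.trans (hP p q (hcond e he p hp) (hcond e he q hq))

theorem ell_eq [Fintype V] [Fintype E] (r : E → Sym2 V) (u w : E → V)
    (huw : ∀ e, u e ≠ w e) (hre : ∀ e, r e = s(u e, w e)) (x : V → ℕ) (y : E → ℕ) :
    (∑ v : V, (Nat.card {e : E // v ∈ r e} : ℤ) * x v) - ∑ e : E, (y e : ℤ)
      = ∑ e : E, ((x (u e) : ℤ) + (x (w e) : ℤ) - (y e : ℤ)) := by
  classical
  have h1 : ∀ v, (Nat.card {e : E // v ∈ r e} : ℤ)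
      = ∑ e : E, if v ∈ r e then (1:ℤ) else 0 := by
    intro v
    rw [Nat.card_eq_fintype_card, Fintype.card_subtype, Finset.sum_boole]
  have h2 : (∑ v : V, (Nat.card {e : E // v ∈ r e} : ℤ) * x v)
      = ∑ e : E, ((x (u e) : ℤ) + (x (w e) : ℤ)) := by
    simp_rw [h1, Finset.sum_mul, ite_mul, one_mul, zero_mul]
    rw [Finset.sum_comm]
    refine Finset.sum_congr rfl fun e _ => ?_
    rw [← Finset.sum_filter]
    have hset : Finset.univ.filter (· ∈ r e) = {u e, w e} := by
      ext v
      simp [hre e, Sym2.mem_iff]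
    rw [hset, Finset.sum_pair (huw e)]
  rw [h2, ← Finset.sum_sub_distrib]

end
end DavAux

/-- **Davenport constant of `A(G)`**: for a connected graph `G` with at least two
vertices, the maximum of the sequence-length
`ℓ(a) = Σ_v deg(v)·a_V(v) − Σ_e a_E(e)` over all atoms `a` of `A(G)` equals
`2|E| − |V| + 1`. -/
theorem davenport_constant {V E : Type*} [Fintype V] [Fintype E]
    (r : E → Sym2 V) (hr : ∀ e : E, ¬ (r e).IsDiag)
    (hconn : ∀ x y : V, AggJoined r Set.univ x y)
    (hV : 2 ≤ Fintype.card V) :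
    (∀ a : (V → ℕ) × (E → ℕ), IsAtomAgg r a →
      (∑ v : V, (Nat.card {e : E // v ∈ r e} : ℤ) * a.1 v) - ∑ e : E, (a.2 e : ℤ)
        ≤ 2 * (Fintype.card E : ℤ) - (Fintype.card V : ℤ) + 1) ∧
    (∃ a : (V → ℕ) × (E → ℕ), IsAtomAgg r a ∧
      (∑ v : V, (Nat.card {e : E // v ∈ r e} : ℤ) * a.1 v) - ∑ e : E, (a.2 e : ℤ)
        = 2 * (Fintype.card E : ℤ) - (Fintype.card V : ℤ) + 1) := by
  classical
  obtain ⟨x0, y0, hxy⟩ := Fintype.exists_pair_of_one_lt_card hV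
  have hEne : Nonempty E := by
    rcases Relation.ReflTransGen.cases_head (hconn x0 y0) with h | ⟨c, ⟨e, _, _⟩, _⟩
    · exact absurd h hxy
    · exact ⟨e⟩
  -- chosen distinct endpoints of each edge
  choose u w huw hre using fun e => DavAux.sym2_nondiag (hr e)
  have hcV : (1 : ℤ) ≤ (Fintype.card V : ℤ) := by
    exact_mod_cast Nat.one_le_of_lt hV
  constructor
  · -- upper bound
    intro a ha
    obtain ⟨h1, h2⟩ := DavAux.atom_le_one ha
    have hagg := ha.1
    set F : Set E := {e | a.2 e ≠ 0 ∨ ∃ u' ∈ r e, a.1 u' = 0} with hF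
    have hFconn : ∀ x y : V, AggJoined r F x y := by
      intro x y
      refine DavAux.conn_lift (P := fun v => a.1 v ≠ 0) ?_ ?_ (hconn x y)
      · intro p q hp hq
        exact DavAux.aggJoined_mono (fun e he => Or.inl he) (DavAux.atom_support_conn ha hp hq)
      · intro e he v hv
        simp only [hF, Set.mem_setOf_eq, not_or, not_exists] at he
        push_neg at he
        exact he.2 v hv
    have hcard : Fintype.card V ≤ (Finset.univ.filter (· ∈ F)).card + 1 :=
      DavAux.card_le_of_conn r F x0 (fun y => hFconn x0 y)
    rw [DavAux.ell_eq r u w huw hre a.1 a.2]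
    have hbound : ∀ e : E, ((a.1 (u e) : ℤ) + (a.1 (w e) : ℤ) - (a.2 e : ℤ))
        ≤ 2 - (if e ∈ F then (1:ℤ) else 0) := by
      intro e
      have hu1 : a.1 (u e) ≤ 1 := h1 _
      have hw1 : a.1 (w e) ≤ 1 := h1 _
      have hmu : u e ∈ r e := by rw [hre e]; exact Sym2.mem_mk_left _ _
      have hmw : w e ∈ r e := by rw [hre e]; exact Sym2.mem_mk_right _ _
      by_cases he : e ∈ F
      · rw [if_pos he]
        rcases he with hz | ⟨v', hv', hv0⟩
        · have := hagg e _ hmu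
          omega
        · have hv' : v' = u e ∨ v' = w e := by
            rw [hre e] at hv'
            exact Sym2.mem_iff.mp hv'
          rcases hv' with rfl | rfl <;> omega
      · rw [if_neg he]
        omega
    calc ∑ e : E, ((a.1 (u e) : ℤ) + (a.1 (w e) : ℤ) - (a.2 e : ℤ))
        ≤ ∑ e : E, (2 - (if e ∈ F then (1:ℤ) else 0)) := Finset.sum_le_sum fun e _ => hbound e
      _ = 2 * (Fintype.card E : ℤ) - ((Finset.univ.filter (· ∈ F)).card : ℤ) := by
          rw [Finset.sum_sub_distrib, Finset.sum_const, Finset.card_univ, Finset.sum_boole]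
          push_cast
          ring
      _ ≤ 2 * (Fintype.card E : ℤ) - (Fintype.card V : ℤ) + 1 := by
          have : ((Fintype.card V : ℤ)) ≤ ((Finset.univ.filter (· ∈ F)).card : ℤ) + 1 := by
            exact_mod_cast hcard
          omega
  · -- existence
    obtain ⟨g, hgF, hginj, hgconn⟩ :=
      DavAux.exists_edge_map r Set.univ x0 (fun y => hconn x0 y)
    set T : Set E := {e | ∃ v, v ≠ x0 ∧ g v = e} with hT
    have hTconn : ∀ x y : V, AggJoined r T x y := fun x y =>
      (DavAux.aggJoined_symm (hgconn x)).trans (hgconn y)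
    set a : (V → ℕ) × (E → ℕ) := (fun _ => 1, fun e => if e ∈ T then 1 else 0) with haT
    have ha1 : ∀ v, a.1 v = 1 := fun _ => rfl
    have ha2 : ∀ e, a.2 e = if e ∈ T then 1 else 0 := fun _ => rfl
    have hatom : IsAtomAgg r a := by
      refine ⟨?_, ?_, ?_⟩
      · intro e v _
        rw [ha1, ha2]
        split <;> omega
      · intro h
        have : a.1 x0 = 0 := by rw [h]; rfl
        rw [ha1] at this
        omega
      · intro b c hb hc habc
        have hsum1 : ∀ v, b.1 v + c.1 v = 1 := by
          intro v
          have : a.1 v = b.1 v + c.1 v := by rw [habc]; rfl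
          rw [ha1] at this
          omega
        have hsum2 : ∀ e, e ∈ T → b.2 e + c.2 e = 1 := by
          intro e he
          have : a.2 e = b.2 e + c.2 e := by rw [habc]; rfl
          rw [ha2, if_pos he] at this
          omega
        -- b.1 is constant along T-walks
        have hconst : ∀ p q : V, AggJoined r T p q → b.1 p = b.1 q := by
          intro p q h
          induction h with
          | refl => rfl
          | @tail s t hps hst ih =>
            obtain ⟨e, he, hrest⟩ := hst
            have hms : s ∈ r e := by rw [hrest]; exact Sym2.mem_mk_left _ _
            have hmt : t ∈ r e := by rw [hrest]; exact Sym2.mem_mk_right _ _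
            have hbs := hb e s hms
            have hbt := hb e t hmt
            have hcs := hc e s hms
            have hct := hc e t hmt
            have h2 := hsum2 e he
            have hss := hsum1 s
            have hst' := hsum1 t
            rw [ih]
            omega
        have hbc : ∀ v, b.1 v = b.1 x0 := fun v => hconst v x0 (hTconn v x0)
        rcases Nat.lt_or_ge (b.1 x0) 1 with h0 | h0
        · left
          have hb0 : ∀ v, b.1 v = 0 := by
            intro v
            have := hbc v
            omega
          refine Prod.ext (funext fun v => hb0 v) (funext fun e => ?_)
          have hmu : u e ∈ r e := by rw [hre e]; exact Sym2.mem_mk_left _ _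
          have := hb e _ hmu
          rw [hb0] at this
          show b.2 e = 0
          omega
        · right
          have hc0 : ∀ v, c.1 v = 0 := by
            intro v
            have h3 := hsum1 v
            have := hbc v
            omega
          refine Prod.ext (funext fun v => hc0 v) (funext fun e => ?_)
          have hmu : u e ∈ r e := by rw [hre e]; exact Sym2.mem_mk_left _ _
          have := hc e _ hmu
          rw [hc0] at this
          show c.2 e = 0
          omega
    refine ⟨a, hatom, ?_⟩
    rw [DavAux.ell_eq r u w huw hre a.1 a.2]
    have hTcard : (Finset.univ.filter (· ∈ T)).card = Fintype.card V - 1 := by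
      have hge : Fintype.card V ≤ (Finset.univ.filter (· ∈ T)).card + 1 :=
        DavAux.card_le_of_conn r T x0 (fun y => hTconn x0 y)
      have hle : (Finset.univ.filter (· ∈ T)).card ≤ Fintype.card V - 1 := by
        have hsub : Finset.univ.filter (· ∈ T) ⊆ (Finset.univ.erase x0).image g := by
          intro e he
          simp only [Finset.mem_filter, Finset.mem_univ, true_and, hT,
            Set.mem_setOf_eq] at he
          obtain ⟨v, hv, hgv⟩ := he
          exact Finset.mem_image.mpr ⟨v, Finset.mem_erase.mpr ⟨hv, Finset.mem_univ v⟩, hgv⟩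
        calc (Finset.univ.filter (· ∈ T)).card
            ≤ ((Finset.univ.erase x0).image g).card := Finset.card_le_card hsub
          _ ≤ (Finset.univ.erase x0).card := Finset.card_image_le
          _ = Fintype.card V - 1 := by
              rw [Finset.card_erase_of_mem (Finset.mem_univ x0), Finset.card_univ]
      omega
    have hstep : ∀ e : E, ((a.1 (u e) : ℤ) + (a.1 (w e) : ℤ) - (a.2 e : ℤ))
        = 2 - (if e ∈ T then (1:ℤ) else 0) := by
      intro e
      rw [ha2]
      split <;> norm_num
    calc ∑ e : E, ((a.1 (u e) : ℤ) + (a.1 (w e) : ℤ) - (a.2 e : ℤ))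
        = ∑ e : E, (2 - (if e ∈ T then (1:ℤ) else 0)) :=
          Finset.sum_congr rfl fun e _ => hstep e
      _ = 2 * (Fintype.card E : ℤ) - ((Finset.univ.filter (· ∈ T)).card : ℤ) := by
          rw [Finset.sum_sub_distrib, Finset.sum_const, Finset.card_univ, Finset.sum_boole]
          push_cast
          ring
      _ = 2 * (Fintype.card E : ℤ) - (Fintype.card V : ℤ) + 1 := by
          rw [hTcard]
          have h1 : 1 ≤ Fintype.card V := by omega
          push_cast [Nat.cast_sub h1]
          ring
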